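/- Let n ≥ 2 be an integer and δ ∈ (1/2, 1] satisfy n(1−δ)/(2−δ) ≤ 1. Then there exists a probability space and a coherent random vector (Z_1, Z_2, …, Z_n) on it such that P(max_{1 ≤ i < j ≤ n} |Z_i − Z_j| ≥ δ) ≥ n(1−δ)/(2−δ). -/

import Mathlib

set_option maxHeartbeats 1000000
set_option synthInstance.maxHeartbeats 100000


open MeasureTheory

noncomputable section

/-- The event that some pair of the variables differ by at least `δ`. -/
def maxEvent {Ω : Type} {n : ℕ} (X : Fin n → Ω → ℝ) (δ : ℝ) : Set Ω :=
  {ω | ∃ i j : Fin n, i < j ∧ δ ≤ |X i ω - X j ω|}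

/-- A random vector is coherent if each coordinate is a conditional expectation of the
indicator of a common event `A` with respect to some sub-σ-algebra. -/
def Coherent {Ω : Type} [mΩ : MeasurableSpace Ω] (P : Measure Ω) {n : ℕ}
    (X : Fin n → Ω → ℝ) : Prop :=
  ∃ (G : Fin n → MeasurableSpace Ω) (A : Set Ω),
    (∀ i, G i ≤ mΩ) ∧ MeasurableSet A ∧
    ∀ i, X i =ᵐ[P] P[A.indicator (fun _ => (1 : ℝ)) | G i]

namespace CoherentAux

/-- The sample space: `n` "B"-atoms, `n` "C"-atoms and one extra atom `U`. -/
abbrev Om (n : ℕ) : Type := Fin n ⊕ (Fin n ⊕ Unit)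

instance (n : ℕ) : DiscreteMeasurableSpace (Om n) := by
  constructor
  intro s
  rw [measurableSet_sum_iff]
  refine ⟨.of_discrete, ?_⟩
  rw [measurableSet_sum_iff]
  exact ⟨.of_discrete, .of_discrete⟩

/-- The label (partition block) of each atom, for expert `j`:
block 0 : value 0, block 1 : value 1, block 2 : value δ, block 3 : value 1-δ. -/
def lab (n : ℕ) [NeZero n] (j : Fin n) : Om n → ℕ
  | .inl i => if i = j then 0 else if i + 1 = j then 2 else 3
  | .inr (.inl i) => if i = j then 1 else if i + 1 = j then 3 else 2
  | .inr (.inr _) => 2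

/-- The value attached to each block. -/
def vals (δ : ℝ) (k : ℕ) : ℝ :=
  if k = 0 then 0 else if k = 1 then 1 else if k = 2 then δ else 1 - δ

/-- The random variables. -/
def Zf (n : ℕ) [NeZero n] (δ : ℝ) (j : Fin n) : Om n → ℝ := fun ω => vals δ (lab n j ω)

/-- The common event. -/
def Aset (n : ℕ) : Set (Om n) := Set.range Sum.inr

/-- Unnormalized weights. -/
def wt (n : ℕ) (δ : ℝ) : Om n → ℝ
  | .inl _ => δ * (1 - δ)
  | .inr (.inl _) => ((n : ℝ) - 2) * (1 - δ) ^ 2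
  | .inr (.inr _) => δ ^ 2 - (((n : ℝ) - 2) * (1 - δ)) ^ 2

/-- Normalizing constant. -/
def Zc (n : ℕ) (δ : ℝ) : ℝ := (2 - δ) * (δ + ((n : ℝ) - 2) * (1 - δ))

/-- Normalized weights. -/
def ρ (n : ℕ) (δ : ℝ) (ω : Om n) : ℝ := wt n δ ω / Zc n δ

/-- The probability measure. -/
def Pm (n : ℕ) (δ : ℝ) : Measure (Om n) :=
  ∑ ω : Om n, ENNReal.ofReal (ρ n δ ω) • Measure.dirac ω

section Facts

variable {n : ℕ} {δ : ℝ}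

lemma Zc_pos (hn : 2 ≤ n) (h0 : 0 < δ) (h1 : δ ≤ 1) : 0 < Zc n δ := by
  have h2 : (2 : ℝ) ≤ (n : ℝ) := by exact_mod_cast hn
  have ha : (0 : ℝ) ≤ ((n : ℝ) - 2) * (1 - δ) := by nlinarith
  have hb : 0 < δ + ((n : ℝ) - 2) * (1 - δ) := by nlinarith
  have h2δ : (0 : ℝ) < 2 - δ := by nlinarith
  exact mul_pos h2δ hb

lemma n1δ_le (h1 : δ ≤ 1) (hsmall : (n : ℝ) * (1 - δ) / (2 - δ) ≤ 1) :
    (n : ℝ) * (1 - δ) ≤ 2 - δ := by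
  have h2δ : (0 : ℝ) < 2 - δ := by nlinarith
  exact (div_le_one h2δ).mp hsmall

lemma wt_nonneg (hn : 2 ≤ n) (h0 : 0 < δ) (h1 : δ ≤ 1)
    (hsmall : (n : ℝ) * (1 - δ) / (2 - δ) ≤ 1) (ω : Om n) : 0 ≤ wt n δ ω := by
  have h2 : (2 : ℝ) ≤ (n : ℝ) := by exact_mod_cast hn
  have hkey := n1δ_le h1 hsmall
  rcases ω with i | i | u
  · show (0:ℝ) ≤ δ * (1 - δ); nlinarith
  · show (0:ℝ) ≤ ((n : ℝ) - 2) * (1 - δ) ^ 2; nlinarith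
  · show (0:ℝ) ≤ δ ^ 2 - (((n : ℝ) - 2) * (1 - δ)) ^ 2
    have hub : ((n : ℝ) - 2) * (1 - δ) ≤ δ := by nlinarith
    have hlb : 0 ≤ ((n : ℝ) - 2) * (1 - δ) := by nlinarith
    nlinarith

lemma ρ_nonneg (hn : 2 ≤ n) (h0 : 0 < δ) (h1 : δ ≤ 1)
    (hsmall : (n : ℝ) * (1 - δ) / (2 - δ) ≤ 1) (ω : Om n) : 0 ≤ ρ n δ ω :=
  div_nonneg (wt_nonneg hn h0 h1 hsmall ω) (Zc_pos hn h0 h1).le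

lemma Pm_apply (s : Set (Om n)) :
    Pm n δ s = ∑ ω : Om n, ENNReal.ofReal (ρ n δ ω) * s.indicator 1 ω := by
  rw [Pm, Measure.finset_sum_apply]
  refine Finset.sum_congr rfl fun ω _ => ?_
  rw [Measure.smul_apply, Measure.dirac_apply' _ (MeasurableSet.of_discrete), smul_eq_mul]

lemma Pm_singleton (x : Om n) : Pm n δ {x} = ENNReal.ofReal (ρ n δ x) := by
  rw [Pm_apply]
  rw [show (∑ ω : Om n, ENNReal.ofReal (ρ n δ ω) * ({x} : Set (Om n)).indicator 1 ω)
      = ∑ ω : Om n, if ω = x then ENNReal.ofReal (ρ n δ ω) else 0 from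
    Finset.sum_congr rfl fun ω _ => by
      by_cases h : ω = x <;> simp [Set.indicator_apply, h]]
  simp

/-- Splitting a sum over `Om n` into the three kinds of atoms. -/
lemma sum_om {M : Type*} [AddCommMonoid M] (f : Om n → M) :
    ∑ ω : Om n, f ω
      = (∑ i : Fin n, f (.inl i)) + ((∑ i : Fin n, f (.inr (.inl i))) + f (.inr (.inr ()))) := by
  rw [Fintype.sum_sum_type, Fintype.sum_sum_type]
  simp

lemma one_ne_zero_fin (hn : 2 ≤ n) [NeZero n] : (1 : Fin n) ≠ 0 := by
  intro h
  have h' := congrArg Fin.val h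
  rw [Fin.val_one', Fin.val_zero, Nat.mod_eq_of_lt (by omega)] at h'
  exact one_ne_zero h'

lemma succ_ne_self_fin (hn : 2 ≤ n) [NeZero n] (i : Fin n) : i + 1 ≠ i := by
  intro h
  refine one_ne_zero_fin hn ?_
  have h2 := congrArg (fun x => x - i) h
  simpa [add_sub_cancel_left, sub_self] using h2

/-- The trichotomy sum over `Fin n`. -/
lemma sum_tri (hn : 2 ≤ n) [NeZero n] (j : Fin n) (x y z : ℝ) :
    ∑ i : Fin n, (if i = j then x else if i + 1 = j then y else z)
        = x + y + ((n : ℝ) - 2) * z := by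
  set j' := j - 1 with hj'
  have hj'j : j' ≠ j := by
    intro h
    exact one_ne_zero_fin hn (sub_eq_self.mp h)
  have hcond : ∀ i : Fin n, (i + 1 = j) ↔ i = j' := by
    intro i
    rw [hj', eq_sub_iff_add_eq]
  have hre : ∀ i ∈ (Finset.univ : Finset (Fin n)),
      (if i = j then x else if i + 1 = j then y else z)
        = (if i = j then x else if i = j' then y else z) := by
    intro i _
    by_cases h : i = j
    · simp [h]
    · rw [if_neg h, if_neg h]
      by_cases h2 : i = j'
      · rw [if_pos ((hcond i).mpr h2), if_pos h2]
      · rw [if_neg (fun hc => h2 ((hcond i).mp hc)), if_neg h2]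
  rw [Finset.sum_congr rfl hre]
  have hsub : ({j, j'} : Finset (Fin n)) ⊆ Finset.univ := Finset.subset_univ _
  rw [← Finset.sum_sdiff hsub]
  have hpair : ∑ i ∈ ({j, j'} : Finset (Fin n)),
      (if i = j then x else if i = j' then y else z) = x + y := by
    rw [Finset.sum_pair (Ne.symm hj'j)]
    rw [if_pos rfl, if_neg hj'j, if_pos rfl]
  have hrest : ∑ i ∈ Finset.univ \ ({j, j'} : Finset (Fin n)),
      (if i = j then x else if i = j' then y else z) = ((n : ℝ) - 2) * z := by
    have hval : ∀ i ∈ Finset.univ \ ({j, j'} : Finset (Fin n)),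
        (if i = j then x else if i = j' then y else z) = z := by
      intro i hi
      simp only [Finset.mem_sdiff, Finset.mem_insert, Finset.mem_singleton] at hi
      rw [if_neg (fun h => hi.2 (Or.inl h)), if_neg (fun h => hi.2 (Or.inr h))]
    rw [Finset.sum_congr rfl hval, Finset.sum_const]
    have hcard : (Finset.univ \ ({j, j'} : Finset (Fin n))).card = n - 2 := by
      rw [Finset.card_sdiff_of_subset hsub, Finset.card_univ, Fintype.card_fin,
        Finset.card_pair (Ne.symm hj'j)]
    rw [hcard, nsmul_eq_mul]
    congr 1
    push_cast [Nat.cast_sub hn]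
    ring
  rw [hpair, hrest]
  ring

lemma ind_inl (i : Fin n) : (Aset n).indicator (fun _ => (1 : ℝ)) (Sum.inl i) = 0 := by
  apply Set.indicator_of_notMem
  rintro ⟨x, hx⟩
  cases hx

lemma ind_inr (x : Fin n ⊕ Unit) :
    (Aset n).indicator (fun _ => (1 : ℝ)) (Sum.inr x) = 1 := by
  have hx : (Sum.inr x : Om n) ∈ Aset n := ⟨x, rfl⟩
  exact Set.indicator_of_mem hx _

/-- The key cancellation: coherence of the construction, in summed form. -/
lemma main_sum (hn : 2 ≤ n) [NeZero n] (j : Fin n) (c : ℕ → ℝ) :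
    ∑ ω : Om n, c (lab n j ω) *
      (wt n δ ω * (Zf n δ j ω - (Aset n).indicator (fun _ => (1 : ℝ)) ω)) = 0 := by
  rw [sum_om]
  have hB : ∑ i : Fin n, c (lab n j (.inl i)) *
        (wt n δ (.inl i) * (Zf n δ j (.inl i) - (Aset n).indicator (fun _ => (1:ℝ)) (.inl i)))
      = ∑ i : Fin n, (if i = j then c 0 * (δ * (1 - δ) * ((0:ℝ) - 0))
          else if i + 1 = j then c 2 * (δ * (1 - δ) * (δ - 0))
          else c 3 * (δ * (1 - δ) * ((1 - δ) - 0))) := by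
    refine Finset.sum_congr rfl fun i _ => ?_
    by_cases h1 : i = j
    · rw [if_pos h1]
      simp only [Zf, lab, wt, if_pos h1, ind_inl]
      norm_num [vals]
    · rw [if_neg h1]
      by_cases h2 : i + 1 = j
      · rw [if_pos h2]
        simp only [Zf, lab, wt, if_neg h1, if_pos h2, ind_inl]
        norm_num [vals]
      · rw [if_neg h2]
        simp only [Zf, lab, wt, if_neg h1, if_neg h2, ind_inl]
        norm_num [vals]
  have hC : ∑ i : Fin n, c (lab n j (.inr (.inl i))) *
        (wt n δ (.inr (.inl i)) *
          (Zf n δ j (.inr (.inl i)) - (Aset n).indicator (fun _ => (1:ℝ)) (.inr (.inl i))))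
      = ∑ i : Fin n, (if i = j then c 1 * (((n : ℝ) - 2) * (1 - δ) ^ 2 * ((1:ℝ) - 1))
          else if i + 1 = j then c 3 * (((n : ℝ) - 2) * (1 - δ) ^ 2 * ((1 - δ) - 1))
          else c 2 * (((n : ℝ) - 2) * (1 - δ) ^ 2 * (δ - 1))) := by
    refine Finset.sum_congr rfl fun i _ => ?_
    by_cases h1 : i = j
    · rw [if_pos h1]
      simp only [Zf, lab, wt, if_pos h1, ind_inr]
      norm_num [vals]
    · rw [if_neg h1]
      by_cases h2 : i + 1 = j
      · rw [if_pos h2]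
        simp only [Zf, lab, wt, if_neg h1, if_pos h2, ind_inr]
        norm_num [vals]
      · rw [if_neg h2]
        simp only [Zf, lab, wt, if_neg h1, if_neg h2, ind_inr]
        norm_num [vals]
  have hU : c (lab n j (.inr (.inr ()))) *
        (wt n δ (.inr (.inr ())) *
          (Zf n δ j (.inr (.inr ())) - (Aset n).indicator (fun _ => (1:ℝ)) (.inr (.inr ()))))
      = c 2 * ((δ ^ 2 - (((n : ℝ) - 2) * (1 - δ)) ^ 2) * (δ - 1)) := by
    simp only [Zf, lab, wt, ind_inr]
    norm_num [vals]
  rw [hB, hC, hU, sum_tri hn j, sum_tri hn j]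
  ring

lemma Pm_univ (hn : 2 ≤ n) (h0 : 0 < δ) (h1 : δ ≤ 1)
    (hsmall : (n : ℝ) * (1 - δ) / (2 - δ) ≤ 1) : Pm n δ Set.univ = 1 := by
  rw [Pm_apply]
  have h1' : ∀ ω : Om n, (Set.univ : Set (Om n)).indicator (1 : Om n → ENNReal) ω = 1 := by
    intro ω; simp
  simp_rw [h1', mul_one]
  rw [← ENNReal.ofReal_sum_of_nonneg (fun ω _ => ρ_nonneg hn h0 h1 hsmall ω)]
  have hsum : ∑ ω : Om n, ρ n δ ω = 1 := by
    unfold ρ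
    rw [← Finset.sum_div]
    rw [sum_om (wt n δ)]
    have hb : ∑ i : Fin n, wt n δ (Sum.inl i) = (n : ℝ) * (δ * (1 - δ)) := by
      rw [Finset.sum_congr rfl (fun (i : Fin n) _ =>
        show wt n δ (Sum.inl i) = δ * (1 - δ) from rfl)]
      rw [Finset.sum_const, Finset.card_univ, Fintype.card_fin, nsmul_eq_mul]
    have hc : ∑ i : Fin n, wt n δ (Sum.inr (Sum.inl i))
        = (n : ℝ) * (((n : ℝ) - 2) * (1 - δ) ^ 2) := by
      rw [Finset.sum_congr rfl (fun (i : Fin n) _ =>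
        show wt n δ (Sum.inr (Sum.inl i)) = ((n : ℝ) - 2) * (1 - δ) ^ 2 from rfl)]
      rw [Finset.sum_const, Finset.card_univ, Fintype.card_fin, nsmul_eq_mul]
    rw [hb, hc]
    rw [show wt n δ (Sum.inr (Sum.inr ())) = δ ^ 2 - (((n : ℝ) - 2) * (1 - δ)) ^ 2 from rfl]
    rw [div_eq_one_iff_eq (Zc_pos hn h0 h1).ne']
    unfold Zc
    ring
  rw [hsum, ENNReal.ofReal_one]

lemma isProb (hn : 2 ≤ n) (h0 : 0 < δ) (h1 : δ ≤ 1)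
    (hsmall : (n : ℝ) * (1 - δ) / (2 - δ) ≤ 1) : IsProbabilityMeasure (Pm n δ) :=
  ⟨Pm_univ hn h0 h1 hsmall⟩

end Facts

attribute [irreducible] Pm

end CoherentAux

open CoherentAux in
theorem exists_coherent_attaining_bound (n : ℕ) (hn : 2 ≤ n) (δ : ℝ)
    (hδ : δ ∈ Set.Ioc (1 / 2 : ℝ) 1) (hsmall : (n : ℝ) * (1 - δ) / (2 - δ) ≤ 1) :
    ∃ (Ω : Type) (mΩ : MeasurableSpace Ω) (P : Measure Ω),
      IsProbabilityMeasure P ∧ ∃ Z : Fin n → Ω → ℝ, Coherent P Z ∧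
        (n : ℝ) * (1 - δ) / (2 - δ) ≤ (P (maxEvent Z δ)).toReal := by
  classical
  obtain ⟨hδhalf, h1⟩ := hδ
  have h0 : (0 : ℝ) < δ := lt_trans (by norm_num) hδhalf
  have hδnn : (0 : ℝ) ≤ δ := h0.le
  haveI : NeZero n := ⟨by omega⟩
  haveI hPprob : IsProbabilityMeasure (Pm n δ) := isProb hn h0 h1 hsmall
  refine ⟨Om n, inferInstance, Pm n δ, hPprob, Zf n δ, ?_, ?_⟩
  · -- Coherence
    refine ⟨fun j => MeasurableSpace.comap (lab n j) ⊤, Aset n,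
      fun j => fun s _ => .of_discrete, .of_discrete, fun j => ?_⟩
    have hm : MeasurableSpace.comap (lab n j) ⊤
        ≤ (inferInstance : MeasurableSpace (Om n)) := fun s _ => MeasurableSet.of_discrete
    haveI : SigmaFinite ((Pm n δ).trim hm) := by
      haveI := isFiniteMeasure_trim (μ := Pm n δ) hm
      infer_instance
    refine ae_eq_condExp_of_forall_setIntegral_eq hm ?_ ?_ ?_ ?_
    · exact Integrable.of_finite
    · exact fun s _ _ => Integrable.integrableOn Integrable.of_finite
    · intro s hs _
      obtain ⟨t, -, rfl⟩ := MeasurableSpace.measurableSet_comap.mp hs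
      rw [← integral_indicator (MeasurableSet.of_discrete),
        ← integral_indicator (MeasurableSet.of_discrete)]
      rw [integral_fintype Integrable.of_finite, integral_fintype Integrable.of_finite]
      rw [← sub_eq_zero, ← Finset.sum_sub_distrib]
      refine Eq.trans (Finset.sum_congr rfl fun ω _ => ?_)
        (main_sum (δ := δ) hn j (fun b => (if b ∈ t then 1 else 0) / Zc n δ))
      rw [measureReal_def, Pm_singleton, ENNReal.toReal_ofReal (ρ_nonneg hn h0 h1 hsmall ω)]
      simp only [smul_eq_mul, Set.indicator_apply, Set.mem_preimage, ρ]
      split_ifs with h <;> ring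
    · refine StronglyMeasurable.aestronglyMeasurable ?_
      refine Measurable.stronglyMeasurable ?_
      exact Measurable.comp (Measurable.of_discrete (f := vals δ))
        (Measurable.of_comap_le (MeasurableSpace.comap_mono le_top))
  · -- The probability bound
    set D : Set (Om n) := {ω : Om n | (∃ i : Fin n, ω = .inl i) ∨ ∃ i : Fin n, ω = .inr (.inl i)}
      with hD
    have hsubset : D ⊆ maxEvent (Zf n δ) δ := by
      rintro ω (⟨i, rfl⟩ | ⟨i, rfl⟩)
      · -- B-atom: expert i has value 0, expert i+1 has value δ
        have hne : i ≠ i + 1 := fun h => succ_ne_self_fin hn i h.symm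
        have hv1 : Zf n δ i (Sum.inl i) = 0 := by
          simp only [Zf, lab, if_pos rfl]
          norm_num [vals]
        have hv2 : Zf n δ (i + 1) (Sum.inl i) = δ := by
          simp only [Zf, lab, if_neg hne, if_pos rfl]
          norm_num [vals]
        rcases hne.lt_or_gt with h | h
        · exact ⟨i, i + 1, h, by rw [hv1, hv2, zero_sub, abs_neg, abs_of_nonneg hδnn]⟩
        · exact ⟨i + 1, i, h, by rw [hv1, hv2, sub_zero, abs_of_nonneg hδnn]⟩
      · -- C-atom: expert i has value 1, expert i+1 has value 1-δ
        have hne : i ≠ i + 1 := fun h => succ_ne_self_fin hn i h.symm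
        have hv1 : Zf n δ i (Sum.inr (Sum.inl i)) = 1 := by
          simp only [Zf, lab, if_pos rfl]
          norm_num [vals]
        have hv2 : Zf n δ (i + 1) (Sum.inr (Sum.inl i)) = 1 - δ := by
          simp only [Zf, lab, if_neg hne, if_pos rfl]
          norm_num [vals]
        rcases hne.lt_or_gt with h | h
        · exact ⟨i, i + 1, h, by
            rw [hv1, hv2, show (1 : ℝ) - (1 - δ) = δ by ring, abs_of_nonneg hδnn]⟩
        · exact ⟨i + 1, i, h, by
            rw [hv1, hv2, show (1 : ℝ) - δ - 1 = -δ by ring, abs_neg, abs_of_nonneg hδnn]⟩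
    have hPD : Pm n δ D = ENNReal.ofReal ((n : ℝ) * (1 - δ) / (2 - δ)) := by
      rw [Pm_apply]
      have hstep : ∑ ω : Om n, ENNReal.ofReal (ρ n δ ω) * D.indicator 1 ω
          = ∑ ω : Om n, ENNReal.ofReal (if ω ∈ D then ρ n δ ω else 0) := by
        refine Finset.sum_congr rfl fun ω _ => ?_
        by_cases h : ω ∈ D
        · rw [Set.indicator_of_mem h, if_pos h, Pi.one_apply, mul_one]
        · rw [Set.indicator_of_notMem h, if_neg h, mul_zero, ENNReal.ofReal_zero]
      rw [hstep, ← ENNReal.ofReal_sum_of_nonneg (fun ω _ => by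
        by_cases h : ω ∈ D
        · rw [if_pos h]; exact ρ_nonneg hn h0 h1 hsmall ω
        · rw [if_neg h])]
      congr 1
      rw [sum_om (fun ω => if ω ∈ D then ρ n δ ω else 0)]
      have hDinl : ∀ i : Fin n, (Sum.inl i : Om n) ∈ D := fun i => Or.inl ⟨i, rfl⟩
      have hDinrl : ∀ i : Fin n, (Sum.inr (Sum.inl i) : Om n) ∈ D := fun i => Or.inr ⟨i, rfl⟩
      have hDu : (Sum.inr (Sum.inr ()) : Om n) ∉ D := by
        rintro (⟨i, h⟩ | ⟨i, h⟩) <;> simp at h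
      rw [Finset.sum_congr rfl (fun (i : Fin n) _ => if_pos (hDinl i)),
        Finset.sum_congr rfl (fun (i : Fin n) _ => if_pos (hDinrl i)), if_neg hDu]
      have hb : ∑ i : Fin n, ρ n δ (Sum.inl i) = (n : ℝ) * (δ * (1 - δ) / Zc n δ) := by
        rw [Finset.sum_congr rfl (fun (i : Fin n) _ =>
          show ρ n δ (Sum.inl i) = δ * (1 - δ) / Zc n δ from rfl)]
        rw [Finset.sum_const, Finset.card_univ, Fintype.card_fin, nsmul_eq_mul]
      have hc : ∑ i : Fin n, ρ n δ (Sum.inr (Sum.inl i))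
          = (n : ℝ) * (((n : ℝ) - 2) * (1 - δ) ^ 2 / Zc n δ) := by
        rw [Finset.sum_congr rfl (fun (i : Fin n) _ =>
          show ρ n δ (Sum.inr (Sum.inl i)) = ((n : ℝ) - 2) * (1 - δ) ^ 2 / Zc n δ from rfl)]
        rw [Finset.sum_const, Finset.card_univ, Fintype.card_fin, nsmul_eq_mul]
      rw [hb, hc]
      have h2 : (2 : ℝ) ≤ (n : ℝ) := by exact_mod_cast hn
      have h2δ : (0:ℝ) < 2 - δ := by nlinarith
      have hS : (0:ℝ) < δ + ((n:ℝ) - 2) * (1 - δ) := by nlinarith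
      have h2δ' : (2:ℝ) - δ ≠ 0 := h2δ.ne'
      have hS' : δ + ((n:ℝ) - 2) * (1 - δ) ≠ 0 := hS.ne'
      simp only [Zc]
      refine Eq.trans (b := (n : ℝ) * (1 - δ) * (δ + ((n:ℝ) - 2) * (1 - δ)) /
        ((2 - δ) * (δ + ((n:ℝ) - 2) * (1 - δ)))) (by ring) (mul_div_mul_right _ _ hS')
    have hnn : (0:ℝ) ≤ (n : ℝ) * (1 - δ) / (2 - δ) := by
      have h2δ : (0:ℝ) < 2 - δ := by nlinarith
      have hmn : (0:ℝ) ≤ (n : ℝ) * (1 - δ) := mul_nonneg (Nat.cast_nonneg n) (by nlinarith)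
      exact div_nonneg hmn h2δ.le
    have hmono := ENNReal.toReal_mono (measure_ne_top (Pm n δ) _)
      (measure_mono hsubset)
    rw [hPD, ENNReal.toReal_ofReal hnn] at hmono
    exact hmono
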